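/- arXiv:2507.23363 — 3 statements merged into one kernel-verified Lean document; each statement's English description precedes it below -/
import Mathlib

section
/- Suppose (N+α)/N = q < p < (N+2s+α)/N and that V, f, g satisfy (V), (f), (g). Then for any a > 0 the functional J is bounded from below on S(a), and J is coercive on S(a): for every sequence {u_n} ⊂ S(a) with ‖u_n‖ → ∞ one has J(u_n) → +∞. -/
open MeasureTheory Filter Topology
open scoped ENNReal

noncomputable section

/-- `ℝ^N`. -/
abbrev RN (N : ℕ) : Type := EuclideanSpace ℝ (Fin N)

/-- The Riesz potential constant `A_α = Γ((N−α)/2) / (Γ(α/2) π^{N/2} 2^α)`. -/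
def rieszA (N : ℕ) (α : ℝ) : ℝ :=
  Real.Gamma (((N : ℝ) - α) / 2) /
    (Real.Gamma (α / 2) * Real.pi ^ ((N : ℝ) / 2) * (2 : ℝ) ^ α)

/-- The squared Gagliardo energy `‖u‖² = (C(N,s)/2) ∫∫ |u(x)−u(y)|²/|x−y|^{N+2s}`,
as an extended nonnegative real. -/
def gagSq (N : ℕ) (s Cns : ℝ) (u : RN N → ℝ) : ℝ≥0∞ :=
  ENNReal.ofReal (Cns / 2) *
    ∫⁻ x : RN N, ∫⁻ y : RN N,
      ENNReal.ofReal (|u x - u y| ^ 2 / ‖x - y‖ ^ ((N : ℝ) + 2 * s))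

/-- The squared Gagliardo energy `‖u‖²` as a real number. -/
def gnormSq (N : ℕ) (s Cns : ℝ) (u : RN N → ℝ) : ℝ := (gagSq N s Cns u).toReal

/-- The Gagliardo energy norm `‖u‖`. -/
def gnorm (N : ℕ) (s Cns : ℝ) (u : RN N → ℝ) : ℝ := Real.sqrt (gnormSq N s Cns u)

/-- The fractional Sobolev space `H^s(ℝ^N) = {u ∈ L² : ‖u‖ < ∞}`. -/
def HsSet (N : ℕ) (s Cns : ℝ) : Set (RN N → ℝ) :=
  {u | MemLp u 2 (volume : Measure (RN N)) ∧ gagSq N s Cns u < ⊤}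

/-- The Riesz interaction `D_α(h₁, h₂) = A_α ∫∫ h₁(x) h₂(y) |x−y|^{α−N}`. -/
def rieszD (N : ℕ) (α : ℝ) (h₁ h₂ : RN N → ℝ) : ℝ :=
  rieszA N α *
    (∫⁻ x : RN N, ∫⁻ y : RN N,
      ENNReal.ofReal (h₁ x * h₂ y * ‖x - y‖ ^ (α - (N : ℝ)))).toReal

/-- `Q(u) = D_α(f|u|^q, f|u|^q)`. -/
def Qf (N : ℕ) (α : ℝ) (f : RN N → ℝ) (q : ℝ) (u : RN N → ℝ) : ℝ :=
  rieszD N α (fun x => f x * |u x| ^ q) (fun x => f x * |u x| ^ q)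

/-- The energy functional
`J(u) = ‖u‖²/2 + (1/2)∫ V u² − Q(u)/(2q) − P(u)/(2p)`. -/
def Jfun (N : ℕ) (s Cns α : ℝ) (V f g : RN N → ℝ) (q p : ℝ) (u : RN N → ℝ) : ℝ :=
  (1 / 2) * gnormSq N s Cns u + (1 / 2) * (∫ x : RN N, V x * (u x) ^ 2)
    - Qf N α f q u / (2 * q) - Qf N α g p u / (2 * p)

/-- The mass constraint sphere `S(a) = {u ∈ H^s : ∫ u² = a}`. -/
def Sset (N : ℕ) (s Cns : ℝ) (a : ℝ) : Set (RN N → ℝ) :=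
  {u | u ∈ HsSet N s Cns ∧ (∫ x : RN N, (u x) ^ 2) = a}

/-- `m(a) = inf_{u ∈ S(a)} J(u)`. -/
def mval (N : ℕ) (s Cns α : ℝ) (V f g : RN N → ℝ) (q p a : ℝ) : ℝ :=
  sInf (Jfun N s Cns α V f g q p '' Sset N s Cns a)

/-- The limit energy functional
`J_∞(u) = ‖u‖²/2 + (V_∞/2)∫ u² − (f_∞²/(2q)) D_α(|u|^q,|u|^q) − (g_∞²/(2p)) D_α(|u|^p,|u|^p)`. -/
def Jinf (N : ℕ) (s Cns α : ℝ) (Vinf finf ginf : ℝ) (q p : ℝ) (u : RN N → ℝ) : ℝ :=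
  (1 / 2) * gnormSq N s Cns u + (Vinf / 2) * (∫ x : RN N, (u x) ^ 2)
    - (finf ^ 2 / (2 * q)) * rieszD N α (fun x => |u x| ^ q) (fun x => |u x| ^ q)
    - (ginf ^ 2 / (2 * p)) * rieszD N α (fun x => |u x| ^ p) (fun x => |u x| ^ p)

/-- `m_∞(a) = inf_{u ∈ S(a)} J_∞(u)`. -/
def mvalInf (N : ℕ) (s Cns α : ℝ) (Vinf finf ginf : ℝ) (q p a : ℝ) : ℝ :=
  sInf (Jinf N s Cns α Vinf finf ginf q p '' Sset N s Cns a)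

/-- The energy functional with the extra autonomous `k`-term:
`I(u) = ‖u‖²/2 + (1/2)∫ V u² − Q(u)/(2q) − D_α(|u|^k,|u|^k)/(2k) − P(u)/(2p)`. -/
def Ifun (N : ℕ) (s Cns α : ℝ) (V f g : RN N → ℝ) (q k p : ℝ) (u : RN N → ℝ) : ℝ :=
  (1 / 2) * gnormSq N s Cns u + (1 / 2) * (∫ x : RN N, V x * (u x) ^ 2)
    - Qf N α f q u / (2 * q)
    - rieszD N α (fun x => |u x| ^ k) (fun x => |u x| ^ k) / (2 * k)
    - Qf N α g p u / (2 * p)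

/-- `(u, λ)` is a weak solution of
`(−Δ)^s u + V u = λ u + f (I_α * (f|u|^q)) |u|^{q−2} u + g (I_α * (g|u|^p)) |u|^{p−2} u`. -/
def isWeakSol (N : ℕ) (s Cns α : ℝ) (V f g : RN N → ℝ) (q p : ℝ)
    (u : RN N → ℝ) (lam : ℝ) : Prop :=
  ∀ φ ∈ HsSet N s Cns,
    (Cns / 2) * (∫ x : RN N, ∫ y : RN N,
        (u x - u y) * (φ x - φ y) / ‖x - y‖ ^ ((N : ℝ) + 2 * s))
      + (∫ x : RN N, V x * u x * φ x)
    = lam * (∫ x : RN N, u x * φ x)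
      + rieszA N α * (∫ x : RN N, ∫ y : RN N,
          f x * f y * |u y| ^ q * |u x| ^ (q - 2) * u x * φ x * ‖x - y‖ ^ (α - (N : ℝ)))
      + rieszA N α * (∫ x : RN N, ∫ y : RN N,
          g x * g y * |u y| ^ p * |u x| ^ (p - 2) * u x * φ x * ‖x - y‖ ^ (α - (N : ℝ)))

/-- `(u, λ)` is a weak solution of the equation with the additional autonomous `k`-term
`(−Δ)^s u + V u = λ u + f (I_α * (f|u|^q)) |u|^{q−2} u + (I_α * |u|^k) |u|^{k−2} u
  + g (I_α * (g|u|^p)) |u|^{p−2} u`. -/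
def isWeakSolK (N : ℕ) (s Cns α : ℝ) (V f g : RN N → ℝ) (q k p : ℝ)
    (u : RN N → ℝ) (lam : ℝ) : Prop :=
  ∀ φ ∈ HsSet N s Cns,
    (Cns / 2) * (∫ x : RN N, ∫ y : RN N,
        (u x - u y) * (φ x - φ y) / ‖x - y‖ ^ ((N : ℝ) + 2 * s))
      + (∫ x : RN N, V x * u x * φ x)
    = lam * (∫ x : RN N, u x * φ x)
      + rieszA N α * (∫ x : RN N, ∫ y : RN N,
          f x * f y * |u y| ^ q * |u x| ^ (q - 2) * u x * φ x * ‖x - y‖ ^ (α - (N : ℝ)))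
      + rieszA N α * (∫ x : RN N, ∫ y : RN N,
          |u y| ^ k * |u x| ^ (k - 2) * u x * φ x * ‖x - y‖ ^ (α - (N : ℝ)))
      + rieszA N α * (∫ x : RN N, ∫ y : RN N,
          g x * g y * |u y| ^ p * |u x| ^ (p - 2) * u x * φ x * ‖x - y‖ ^ (α - (N : ℝ)))

/-- Young-type bound: for `0 ≤ β < 2` one has `c x^β ≤ x²/4 + K`. -/
lemma lemA (c β : ℝ) (hc : 0 ≤ c) (hβ : 0 ≤ β) (hβ2 : β < 2) :
    ∃ K : ℝ, 0 ≤ K ∧ ∀ x : ℝ, 0 ≤ x → c * x ^ β ≤ (1 / 4) * x ^ 2 + K := by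
  have h4c : (0:ℝ) ≤ 4 * c := by linarith
  set R : ℝ := (4 * c) ^ (1 / (2 - β)) with hR
  have hRnn : 0 ≤ R := Real.rpow_nonneg h4c _
  refine ⟨c * R ^ β, mul_nonneg hc (Real.rpow_nonneg hRnn _), ?_⟩
  intro x hx
  rcases le_or_gt x R with h | h
  · have h1 : c * x ^ β ≤ c * R ^ β :=
      mul_le_mul_of_nonneg_left (Real.rpow_le_rpow hx h hβ) hc
    nlinarith [sq_nonneg x]
  · have hx0 : 0 < x := lt_of_le_of_lt hRnn h
    have h2 : R ^ (2 - β) ≤ x ^ (2 - β) :=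
      Real.rpow_le_rpow hRnn h.le (by linarith)
    have h3 : R ^ (2 - β) = 4 * c := by
      rw [hR, ← Real.rpow_mul h4c, one_div,
        inv_mul_cancel₀ (ne_of_gt (by linarith : (0:ℝ) < 2 - β)),
        Real.rpow_one]
    have h1 : 4 * c ≤ x ^ (2 - β) := h3 ▸ h2
    have hx2 : x ^ 2 = x ^ β * x ^ (2 - β) := by
      rw [← Real.rpow_natCast x 2, ← Real.rpow_add hx0]
      norm_num
    have h5 : c * x ^ β ≤ (1 / 4 * x ^ (2 - β)) * x ^ β :=
      mul_le_mul_of_nonneg_right (by linarith) (Real.rpow_nonneg hx _)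
    have hKnn : 0 ≤ c * R ^ β := mul_nonneg hc (Real.rpow_nonneg hRnn _)
    have : (1 / 4 * x ^ (2 - β)) * x ^ β = (1 / 4) * x ^ 2 := by
      rw [hx2]; ring
    linarith
  
/-- Bounding the Riesz interaction of `F·h` by that of `h` when `0 < m ≤ F ≤ M`. -/
lemma rieszD_mul_le (N : ℕ) (α : ℝ) (F h : RN N → ℝ) (m M : ℝ)
    (hA : 0 ≤ rieszA N α) (hm : 0 < m) (hM : 0 < M)
    (hhn : ∀ x, 0 ≤ h x) (hlb : ∀ x, m ≤ F x) (hub : ∀ x, F x ≤ M) :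
    rieszD N α (fun x => F x * h x) (fun x => F x * h x) ≤ M ^ 2 * rieszD N α h h := by
  set r : RN N → RN N → ℝ := fun x y => ‖x - y‖ ^ (α - (N : ℝ)) with hr
  have hrnn : ∀ x y : RN N, 0 ≤ r x y := fun x y => Real.rpow_nonneg (norm_nonneg _) _
  set L : ℝ≥0∞ := ∫⁻ x : RN N, ∫⁻ y : RN N, ENNReal.ofReal (h x * h y * r x y) with hL
  set Lf : ℝ≥0∞ := ∫⁻ x : RN N, ∫⁻ y : RN N,
      ENNReal.ofReal ((F x * h x) * (F y * h y) * r x y) with hLf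
  have pt_ub : ∀ x y : RN N,
      ENNReal.ofReal ((F x * h x) * (F y * h y) * r x y) ≤
        ENNReal.ofReal (M ^ 2) * ENNReal.ofReal (h x * h y * r x y) := by
    intro x y
    rw [← ENNReal.ofReal_mul (by positivity)]
    apply ENNReal.ofReal_le_ofReal
    have h1 : F x * h x ≤ M * h x := mul_le_mul_of_nonneg_right (hub x) (hhn x)
    have h2 : F y * h y ≤ M * h y := mul_le_mul_of_nonneg_right (hub y) (hhn y)
    have h3 : (F x * h x) * (F y * h y) ≤ (M * h x) * (M * h y) :=
      mul_le_mul h1 h2 (mul_nonneg (le_trans hm.le (hlb y)) (hhn y))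
        (mul_nonneg hM.le (hhn x))
    calc (F x * h x) * (F y * h y) * r x y
        ≤ (M * h x) * (M * h y) * r x y := mul_le_mul_of_nonneg_right h3 (hrnn x y)
      _ = M ^ 2 * (h x * h y * r x y) := by ring
  have pt_lb : ∀ x y : RN N,
      ENNReal.ofReal (m ^ 2) * ENNReal.ofReal (h x * h y * r x y) ≤
        ENNReal.ofReal ((F x * h x) * (F y * h y) * r x y) := by
    intro x y
    rw [← ENNReal.ofReal_mul (by positivity)]
    apply ENNReal.ofReal_le_ofReal
    have h1 : m * h x ≤ F x * h x := mul_le_mul_of_nonneg_right (hlb x) (hhn x)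
    have h2 : m * h y ≤ F y * h y := mul_le_mul_of_nonneg_right (hlb y) (hhn y)
    have h3 : (m * h x) * (m * h y) ≤ (F x * h x) * (F y * h y) :=
      mul_le_mul h1 h2 (mul_nonneg hm.le (hhn y))
        (mul_nonneg (le_trans hm.le (hlb x)) (hhn x))
    calc m ^ 2 * (h x * h y * r x y)
        = (m * h x) * (m * h y) * r x y := by ring
      _ ≤ (F x * h x) * (F y * h y) * r x y := mul_le_mul_of_nonneg_right h3 (hrnn x y)
  have hub' : Lf ≤ ENNReal.ofReal (M ^ 2) * L := by
    rw [hLf, hL]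
    calc (∫⁻ x : RN N, ∫⁻ y : RN N,
          ENNReal.ofReal ((F x * h x) * (F y * h y) * r x y))
        ≤ ∫⁻ x : RN N, ∫⁻ y : RN N,
            ENNReal.ofReal (M ^ 2) * ENNReal.ofReal (h x * h y * r x y) :=
          lintegral_mono fun x => lintegral_mono fun y => pt_ub x y
      _ = ∫⁻ x : RN N, ENNReal.ofReal (M ^ 2) *
            ∫⁻ y : RN N, ENNReal.ofReal (h x * h y * r x y) :=
          lintegral_congr fun x => lintegral_const_mul' _ _ ENNReal.ofReal_ne_top
      _ = ENNReal.ofReal (M ^ 2) * ∫⁻ x : RN N, ∫⁻ y : RN N,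
            ENNReal.ofReal (h x * h y * r x y) :=
          lintegral_const_mul' _ _ ENNReal.ofReal_ne_top
  have hlb' : ENNReal.ofReal (m ^ 2) * L ≤ Lf := by
    rw [hLf, hL]
    calc ENNReal.ofReal (m ^ 2) * ∫⁻ x : RN N, ∫⁻ y : RN N,
          ENNReal.ofReal (h x * h y * r x y)
        = ∫⁻ x : RN N, ENNReal.ofReal (m ^ 2) *
            ∫⁻ y : RN N, ENNReal.ofReal (h x * h y * r x y) :=
          (lintegral_const_mul' _ _ ENNReal.ofReal_ne_top).symm
      _ = ∫⁻ x : RN N, ∫⁻ y : RN N,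
            ENNReal.ofReal (m ^ 2) * ENNReal.ofReal (h x * h y * r x y) :=
          lintegral_congr fun x => (lintegral_const_mul' _ _ ENNReal.ofReal_ne_top).symm
      _ ≤ ∫⁻ x : RN N, ∫⁻ y : RN N,
            ENNReal.ofReal ((F x * h x) * (F y * h y) * r x y) :=
          lintegral_mono fun x => lintegral_mono fun y => pt_lb x y
  show rieszA N α * Lf.toReal ≤ M ^ 2 * (rieszA N α * L.toReal)
  by_cases hLt : L = ⊤
  · have hm2 : ENNReal.ofReal (m ^ 2) ≠ 0 := by
      exact (ENNReal.ofReal_pos.mpr (by positivity)).ne'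
    have hLft : Lf = ⊤ := by
      rw [hLt, ENNReal.mul_top hm2] at hlb'
      exact top_le_iff.mp hlb'
    rw [hLt, hLft]; simp
  · have hfin : ENNReal.ofReal (M ^ 2) * L ≠ ⊤ :=
      ENNReal.mul_ne_top ENNReal.ofReal_ne_top hLt
    have ht : Lf.toReal ≤ (ENNReal.ofReal (M ^ 2) * L).toReal :=
      ENNReal.toReal_mono hfin hub'
    rw [ENNReal.toReal_mul, ENNReal.toReal_ofReal (by positivity)] at ht
    calc rieszA N α * Lf.toReal ≤ rieszA N α * (M ^ 2 * L.toReal) :=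
          mul_le_mul_of_nonneg_left ht hA
      _ = M ^ 2 * (rieszA N α * L.toReal) := by ring

set_option maxHeartbeats 1000000 in
/-- Lemma 2.1 (1) of the paper. In the case
`(N+α)/N = q < p < (N+2s+α)/N`, for any `a > 0` the functional `J` is bounded from below
and coercive on `S(a)`. -/
theorem statement3
    (N : ℕ) (s Cns α : ℝ)
    (hs0 : 0 < s) (hs1 : s < 1) (hN : 2 * s < (N : ℝ))
    (hα0 : 0 < α) (hαN : α < (N : ℝ)) (hCns : 0 < Cns)
    (q p : ℝ) (hq : q = ((N : ℝ) + α) / N) (hqp : q < p)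
    (hp : p < ((N : ℝ) + 2 * s + α) / N)
    (V : RN N → ℝ) (Vinf : ℝ)
    (hVmeas : Measurable V)
    (hV0 : ∀ x, 0 ≤ V x) (hVub : ∀ x, V x ≤ Vinf)
    (hVtend : Tendsto V (cocompact (RN N)) (𝓝 Vinf))
    (f g : RN N → ℝ) (finf fmax ginf gmax : ℝ)
    (hfmeas : Measurable f) (hgmeas : Measurable g)
    (hfinf : 0 < finf) (hginf : 0 < ginf)
    (hftend : Tendsto f (cocompact (RN N)) (𝓝 finf))
    (hgtend : Tendsto g (cocompact (RN N)) (𝓝 ginf))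
    (hflb : ∀ x, finf ≤ f x) (hfub : ∀ x, f x ≤ fmax)
    (hglb : ∀ x, ginf ≤ g x) (hgub : ∀ x, g x ≤ gmax)
    (hfmax : fmax = ⨆ x, f x) (hgmax : gmax = ⨆ x, g x)
    (hGN : ∀ t : ℝ, ((N : ℝ) + α) / N ≤ t → t < ((N : ℝ) + α) / ((N : ℝ) - 2 * s) →
      ∃ Cgn : ℝ, 0 < Cgn ∧ ∀ u ∈ HsSet N s Cns,
        rieszD N α (fun x => |u x| ^ t) (fun x => |u x| ^ t) ≤
          Cgn * gnorm N s Cns u ^ (2 * t * (((N : ℝ) * t - (N : ℝ) - α) / (2 * t * s)))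
            * (∫ x : RN N, (u x) ^ 2) ^ (t * (1 - ((N : ℝ) * t - (N : ℝ) - α) / (2 * t * s))))
    (a : ℝ) (ha : 0 < a) :
    (∃ M : ℝ, ∀ u ∈ Sset N s Cns a, M ≤ Jfun N s Cns α V f g q p u) ∧
    (∀ u : ℕ → RN N → ℝ, (∀ n, u n ∈ Sset N s Cns a) →
      Tendsto (fun n => gnorm N s Cns (u n)) atTop atTop →
      Tendsto (fun n => Jfun N s Cns α V f g q p (u n)) atTop atTop) := by
  have hN0 : (0:ℝ) < N := by nlinarith
  have hq0 : 0 < q := by rw [hq]; exact div_pos (by linarith) hN0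
  have hp0 : 0 < p := lt_trans hq0 hqp
  have hNq : (N:ℝ) * q - (N:ℝ) - α = 0 := by
    rw [hq]; field_simp; ring
  have hA : 0 ≤ rieszA N α := by
    unfold rieszA
    have h1 : 0 < Real.Gamma (((N:ℝ) - α) / 2) := Real.Gamma_pos_of_pos (by linarith)
    have h2 : 0 < Real.Gamma (α / 2) := Real.Gamma_pos_of_pos (by linarith)
    have h3 : 0 < Real.pi ^ ((N:ℝ) / 2) := Real.rpow_pos_of_pos Real.pi_pos _
    have h4 : (0:ℝ) < (2:ℝ) ^ α := Real.rpow_pos_of_pos (by norm_num) _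
    positivity
  have hfm : 0 < fmax := lt_of_lt_of_le hfinf (le_trans (hflb 0) (hfub 0))
  have hgm : 0 < gmax := lt_of_lt_of_le hginf (le_trans (hglb 0) (hgub 0))
  -- the GN inequalities at q and p
  have hqlt : q < ((N:ℝ) + α) / ((N:ℝ) - 2 * s) := by
    rw [hq]
    exact div_lt_div_of_pos_left (by linarith) (by linarith) (by linarith)
  have hplt : p < ((N:ℝ) + α) / ((N:ℝ) - 2 * s) := by
    refine lt_of_lt_of_le hp ?_
    rw [div_le_div_iff₀ hN0 (by linarith)]
    nlinarith [mul_pos hs0 hα0, sq_nonneg s]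
  obtain ⟨Cq, hCqpos, hCq⟩ := hGN q (le_of_eq hq.symm) hqlt
  obtain ⟨Cp, hCppos, hCp⟩ := hGN p (by rw [← hq]; exact hqp.le) hplt
  -- exponents
  have hEp : 2 * p * (((N:ℝ) * p - (N:ℝ) - α) / (2 * p * s)) =
      ((N:ℝ) * p - (N:ℝ) - α) / s := by
    field_simp
  have hNpα : (N:ℝ) + α < p * (N:ℝ) := by
    have := (div_lt_iff₀ hN0).mp (by rw [← hq]; exact hqp)
    linarith
  have hNp2 : p * (N:ℝ) < (N:ℝ) + 2 * s + α := (lt_div_iff₀ hN0).mp hp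
  have hβ0 : 0 ≤ ((N:ℝ) * p - (N:ℝ) - α) / s :=
    div_nonneg (by nlinarith) hs0.le
  have hβ2 : ((N:ℝ) * p - (N:ℝ) - α) / s < 2 := by
    rw [div_lt_iff₀ hs0]; nlinarith
  have hc2n : 0 ≤ gmax ^ 2 *
      (Cp * a ^ (p * (1 - ((N:ℝ) * p - (N:ℝ) - α) / (2 * p * s)))) / (2 * p) :=
    div_nonneg (mul_nonneg (sq_nonneg _)
      (mul_nonneg hCppos.le (Real.rpow_nonneg ha.le _))) (by linarith)
  obtain ⟨K, hK0, hK⟩ := lemA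
    (gmax ^ 2 * (Cp * a ^ (p * (1 - ((N:ℝ) * p - (N:ℝ) - α) / (2 * p * s)))) / (2 * p))
    (((N:ℝ) * p - (N:ℝ) - α) / s) hc2n hβ0 hβ2
  -- the main lower bound
  have hmain : ∀ u ∈ Sset N s Cns a,
      (1 / 4) * gnorm N s Cns u ^ 2 - (fmax ^ 2 * (Cq * a ^ q) / (2 * q) + K)
        ≤ Jfun N s Cns α V f g q p u := by
    intro u hu
    obtain ⟨huH, hua⟩ := hu
    have hV : 0 ≤ ∫ x : RN N, V x * (u x) ^ 2 :=
      integral_nonneg fun x => mul_nonneg (hV0 x) (sq_nonneg _)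
    have hx0 : 0 ≤ gnorm N s Cns u := Real.sqrt_nonneg _
    have hxsq : gnorm N s Cns u ^ 2 = gnormSq N s Cns u :=
      Real.sq_sqrt ENNReal.toReal_nonneg
    have hhn : ∀ t : ℝ, ∀ x : RN N, 0 ≤ |u x| ^ t :=
      fun t x => Real.rpow_nonneg (abs_nonneg _) _
    -- Qf bound
    have hQf : Qf N α f q u ≤
        fmax ^ 2 * rieszD N α (fun x => |u x| ^ q) (fun x => |u x| ^ q) :=
      rieszD_mul_le N α f (fun x => |u x| ^ q) finf fmax hA hfinf hfm
        (hhn q) hflb hfub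
    have hDq := hCq u huH
    rw [hua, hNq] at hDq
    simp only [zero_div, mul_zero, sub_zero, mul_one, Real.rpow_zero] at hDq
    have hQf2 : Qf N α f q u ≤ fmax ^ 2 * (Cq * a ^ q) :=
      le_trans hQf (mul_le_mul_of_nonneg_left hDq (sq_nonneg fmax))
    have hQf3 : Qf N α f q u / (2 * q) ≤ fmax ^ 2 * (Cq * a ^ q) / (2 * q) :=
      div_le_div_of_nonneg_right hQf2 (by linarith)
    -- Qg bound
    have hQg : Qf N α g p u ≤
        gmax ^ 2 * rieszD N α (fun x => |u x| ^ p) (fun x => |u x| ^ p) :=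
      rieszD_mul_le N α g (fun x => |u x| ^ p) ginf gmax hA hginf hgm
        (hhn p) hglb hgub
    have hDp := hCp u huH
    rw [hua, hEp] at hDp
    have hQg2 : Qf N α g p u ≤ gmax ^ 2 *
        (Cp * gnorm N s Cns u ^ (((N:ℝ) * p - (N:ℝ) - α) / s) *
          a ^ (p * (1 - ((N:ℝ) * p - (N:ℝ) - α) / (2 * p * s)))) :=
      le_trans hQg (mul_le_mul_of_nonneg_left hDp (sq_nonneg gmax))
    have hQg3 : Qf N α g p u / (2 * p) ≤
        gmax ^ 2 * (Cp * a ^ (p * (1 - ((N:ℝ) * p - (N:ℝ) - α) / (2 * p * s)))) / (2 * p)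
          * gnorm N s Cns u ^ (((N:ℝ) * p - (N:ℝ) - α) / s) := by
      calc Qf N α g p u / (2 * p)
          ≤ gmax ^ 2 * (Cp * gnorm N s Cns u ^ (((N:ℝ) * p - (N:ℝ) - α) / s) *
              a ^ (p * (1 - ((N:ℝ) * p - (N:ℝ) - α) / (2 * p * s)))) / (2 * p) :=
            div_le_div_of_nonneg_right hQg2 (by linarith)
        _ = _ := by ring
    have hKx := hK (gnorm N s Cns u) hx0
    unfold Jfun
    rw [← hxsq]
    linarith
  refine ⟨⟨-(fmax ^ 2 * (Cq * a ^ q) / (2 * q) + K), fun u hu => ?_⟩,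
    fun u hu hgn => ?_⟩
  · have h1 := hmain u hu
    linarith [sq_nonneg (gnorm N s Cns u)]
  · refine tendsto_atTop_mono (fun n => hmain (u n) (hu n)) ?_
    have h1 : Tendsto (fun y : ℝ => (1 / 4) * y ^ 2
        - (fmax ^ 2 * (Cq * a ^ q) / (2 * q) + K)) atTop atTop := by
      apply tendsto_atTop_add_const_right
      exact Tendsto.const_mul_atTop (by norm_num) (tendsto_pow_atTop two_ne_zero)
    exact h1.comp hgn
end
end

section
/- Suppose (N+α)/N < q < p = (N+2s+α)/N and that V, f, g satisfy (V), (f), (g). Then for any a with 0 < a < a* := (p / (C_{α,p} g_max²))^{1/(p−1)}, one has m(a) ≤ m_∞(a). -/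
open MeasureTheory Filter Topology
open scoped ENNReal

noncomputable section

set_option maxHeartbeats 1000000 in
lemma rieszA_pos (N : ℕ) (α : ℝ) (hα0 : 0 < α) (hαN : α < (N : ℝ)) : 0 < rieszA N α := by
  have h1 : 0 < Real.Gamma (((N : ℝ) - α) / 2) := Real.Gamma_pos_of_pos (by linarith)
  have h2 : 0 < Real.Gamma (α / 2) := Real.Gamma_pos_of_pos (by linarith)
  have h3 : (0:ℝ) < Real.pi ^ ((N : ℝ) / 2) := Real.rpow_pos_of_pos Real.pi_pos _
  have h4 : (0:ℝ) < (2 : ℝ) ^ α := Real.rpow_pos_of_pos (by norm_num) _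
  exact div_pos h1 (by positivity)

/-- Sandwich for the Riesz interaction of `F·G` versus `G`. -/
lemma rieszD_sandwich (N : ℕ) (α : ℝ) (hα0 : 0 < α) (hαN : α < (N : ℝ))
    (F G : RN N → ℝ) (hG : ∀ x, 0 ≤ G x) (c d : ℝ) (hc : 0 < c)
    (hlb : ∀ x, c ≤ F x) (hub : ∀ x, F x ≤ d) :
    c ^ 2 * rieszD N α G G ≤ rieszD N α (fun x => F x * G x) (fun x => F x * G x) ∧
      rieszD N α (fun x => F x * G x) (fun x => F x * G x) ≤ d ^ 2 * rieszD N α G G := by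
  have hA : 0 ≤ rieszA N α := (rieszA_pos N α hα0 hαN).le
  set L : ℝ≥0∞ := ∫⁻ x : RN N, ∫⁻ y : RN N,
      ENNReal.ofReal (G x * G y * ‖x - y‖ ^ (α - (N : ℝ))) with hL
  set Lf : ℝ≥0∞ := ∫⁻ x : RN N, ∫⁻ y : RN N,
      ENNReal.ofReal ((F x * G x) * (F y * G y) * ‖x - y‖ ^ (α - (N : ℝ))) with hLf
  have key : ∀ (x y : RN N),
      c ^ 2 * (G x * G y * ‖x - y‖ ^ (α - (N : ℝ)))
        ≤ (F x * G x) * (F y * G y) * ‖x - y‖ ^ (α - (N : ℝ)) ∧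
      (F x * G x) * (F y * G y) * ‖x - y‖ ^ (α - (N : ℝ))
        ≤ d ^ 2 * (G x * G y * ‖x - y‖ ^ (α - (N : ℝ))) := by
    intro x y
    have hr : (0:ℝ) ≤ ‖x - y‖ ^ (α - (N : ℝ)) := Real.rpow_nonneg (norm_nonneg _) _
    have hnn : (0:ℝ) ≤ G x * G y * ‖x - y‖ ^ (α - (N : ℝ)) := by
      have := hG x; have := hG y; positivity
    have hFx : (0:ℝ) < F x := lt_of_lt_of_le hc (hlb x)
    have hFy : (0:ℝ) < F y := lt_of_lt_of_le hc (hlb y)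
    have h1 : c * c ≤ F x * F y := mul_le_mul (hlb x) (hlb y) hc.le hFx.le
    have h2 : F x * F y ≤ d * d := mul_le_mul (hub x) (hub y) hFy.le (hc.le.trans ((hlb x).trans (hub x)))
    constructor
    · calc c ^ 2 * (G x * G y * ‖x - y‖ ^ (α - (N : ℝ)))
          = (c * c) * (G x * G y * ‖x - y‖ ^ (α - (N : ℝ))) := by ring
        _ ≤ (F x * F y) * (G x * G y * ‖x - y‖ ^ (α - (N : ℝ))) :=
            mul_le_mul_of_nonneg_right h1 hnn
        _ = (F x * G x) * (F y * G y) * ‖x - y‖ ^ (α - (N : ℝ)) := by ring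
    · calc (F x * G x) * (F y * G y) * ‖x - y‖ ^ (α - (N : ℝ))
          = (F x * F y) * (G x * G y * ‖x - y‖ ^ (α - (N : ℝ))) := by ring
        _ ≤ (d * d) * (G x * G y * ‖x - y‖ ^ (α - (N : ℝ))) :=
            mul_le_mul_of_nonneg_right h2 hnn
        _ = d ^ 2 * (G x * G y * ‖x - y‖ ^ (α - (N : ℝ))) := by ring
  have hlo : ENNReal.ofReal (c ^ 2) * L ≤ Lf := by
    rw [hL, hLf, ← lintegral_const_mul' _ _ ENNReal.ofReal_ne_top]
    refine lintegral_mono fun x => ?_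
    rw [← lintegral_const_mul' _ _ ENNReal.ofReal_ne_top]
    refine lintegral_mono fun y => ?_
    rw [← ENNReal.ofReal_mul (by positivity)]
    exact ENNReal.ofReal_le_ofReal (key x y).1
  have hhi : Lf ≤ ENNReal.ofReal (d ^ 2) * L := by
    rw [hL, hLf, ← lintegral_const_mul' _ _ ENNReal.ofReal_ne_top]
    refine lintegral_mono fun x => ?_
    rw [← lintegral_const_mul' _ _ ENNReal.ofReal_ne_top]
    refine lintegral_mono fun y => ?_
    rw [← ENNReal.ofReal_mul (by positivity)]
    exact ENNReal.ofReal_le_ofReal (key x y).2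
  have hDG : rieszD N α G G = rieszA N α * L.toReal := rfl
  have hDF : rieszD N α (fun x => F x * G x) (fun x => F x * G x)
      = rieszA N α * Lf.toReal := rfl
  rcases eq_or_ne L ⊤ with hLt | hLt
  · have hc2 : ENNReal.ofReal (c ^ 2) ≠ 0 := by
      simp only [ne_eq, ENNReal.ofReal_eq_zero, not_le]; positivity
    have hLft : Lf = ⊤ := by
      refine top_unique ?_
      calc (⊤ : ℝ≥0∞) = ENNReal.ofReal (c ^ 2) * L := by
            rw [hLt, ENNReal.mul_top hc2]
        _ ≤ Lf := hlo
    rw [hDG, hDF, hLt, hLft]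
    simp
  · have hLflt : Lf ≠ ⊤ := by
      refine ne_top_of_le_ne_top ?_ hhi
      exact ENNReal.mul_ne_top ENNReal.ofReal_ne_top hLt
    constructor
    · have h := ENNReal.toReal_mono hLflt hlo
      rw [ENNReal.toReal_mul, ENNReal.toReal_ofReal (by positivity)] at h
      rw [hDG, hDF]
      calc c ^ 2 * (rieszA N α * L.toReal) = rieszA N α * (c ^ 2 * L.toReal) := by ring
        _ ≤ rieszA N α * Lf.toReal := mul_le_mul_of_nonneg_left h hA
    · have h := ENNReal.toReal_mono (ENNReal.mul_ne_top ENNReal.ofReal_ne_top hLt) hhi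
      rw [ENNReal.toReal_mul, ENNReal.toReal_ofReal (by positivity)] at h
      rw [hDG, hDF]
      calc rieszA N α * Lf.toReal ≤ rieszA N α * (d ^ 2 * L.toReal) :=
            mul_le_mul_of_nonneg_left h hA
        _ = d ^ 2 * (rieszA N α * L.toReal) := by ring

/-- Coercivity of `X ↦ ε X² − K X^θ` for `0 < θ < 2`. -/
lemma coercive_bound {ε K θ : ℝ} (hε : 0 < ε) (hK : 0 < K) (hθ0 : 0 < θ) (hθ2 : θ < 2) :
    ∃ B : ℝ, ∀ X : ℝ, 0 ≤ X → -B ≤ ε * X ^ (2:ℝ) - K * X ^ θ := by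
  refine ⟨K * ((K / ε) ^ (1 / (2 - θ))) ^ θ, fun X hX => ?_⟩
  set R : ℝ := (K / ε) ^ (1 / (2 - θ)) with hR
  have hKε : (0:ℝ) < K / ε := div_pos hK hε
  have hR0 : 0 < R := Real.rpow_pos_of_pos hKε _
  have hXsq : (0:ℝ) ≤ ε * X ^ (2:ℝ) := mul_nonneg hε.le (Real.rpow_nonneg hX _)
  by_cases hXR : X ≤ R
  · have h1 : K * X ^ θ ≤ K * R ^ θ :=
      mul_le_mul_of_nonneg_left (Real.rpow_le_rpow hX hXR hθ0.le) hK.le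
    linarith
  · push_neg at hXR
    have hX0 : 0 < X := hR0.trans hXR
    have hRe : R ^ (2 - θ) = K / ε := by
      have h2θ : (2:ℝ) - θ ≠ 0 := by linarith
      rw [hR, ← Real.rpow_mul hKε.le, one_div_mul_cancel h2θ, Real.rpow_one]
    have hmono : R ^ (2 - θ) ≤ X ^ (2 - θ) :=
      Real.rpow_le_rpow hR0.le hXR.le (by linarith)
    rw [hRe] at hmono
    have h2 : K ≤ ε * X ^ (2 - θ) := by
      rw [div_le_iff₀ hε] at hmono; linarith
    have h3 : K * X ^ θ ≤ ε * X ^ (2:ℝ) := by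
      calc K * X ^ θ ≤ (ε * X ^ (2 - θ)) * X ^ θ :=
            mul_le_mul_of_nonneg_right h2 (Real.rpow_nonneg hX0.le _)
        _ = ε * X ^ (2:ℝ) := by
            rw [mul_assoc, ← Real.rpow_add hX0]; norm_num
    have hB : 0 ≤ K * R ^ θ := mul_nonneg hK.le (Real.rpow_nonneg hR0.le _)
    linarith

set_option maxHeartbeats 1000000 in
/-- Lemma 2.5 (2) of the paper. In the case
`(N+α)/N < q < p = (N+2s+α)/N`, for any `0 < a < a* = (p/(C_{α,p} g_max²))^{1/(p−1)}`
one has `m(a) ≤ m_∞(a)`. -/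
theorem statement12
    (N : ℕ) (s Cns α : ℝ)
    (hs0 : 0 < s) (hs1 : s < 1) (hN : 2 * s < (N : ℝ))
    (hα0 : 0 < α) (hαN : α < (N : ℝ)) (hCns : 0 < Cns)
    (q p : ℝ) (hq : ((N : ℝ) + α) / N < q) (hqp : q < p)
    (hp : p = ((N : ℝ) + 2 * s + α) / N)
    (V : RN N → ℝ) (Vinf : ℝ)
    (hVmeas : Measurable V)
    (hV0 : ∀ x, 0 ≤ V x) (hVub : ∀ x, V x ≤ Vinf)
    (hVtend : Tendsto V (cocompact (RN N)) (𝓝 Vinf))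
    (f g : RN N → ℝ) (finf fmax ginf gmax : ℝ)
    (hfmeas : Measurable f) (hgmeas : Measurable g)
    (hfinf : 0 < finf) (hginf : 0 < ginf)
    (hftend : Tendsto f (cocompact (RN N)) (𝓝 finf))
    (hgtend : Tendsto g (cocompact (RN N)) (𝓝 ginf))
    (hflb : ∀ x, finf ≤ f x) (hfub : ∀ x, f x ≤ fmax)
    (hglb : ∀ x, ginf ≤ g x) (hgub : ∀ x, g x ≤ gmax)
    (hfmax : fmax = ⨆ x, f x) (hgmax : gmax = ⨆ x, g x)
    (hGN : ∀ t : ℝ, ((N : ℝ) + α) / N ≤ t → t < ((N : ℝ) + α) / ((N : ℝ) - 2 * s) →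
      ∃ Cgn : ℝ, 0 < Cgn ∧ ∀ u ∈ HsSet N s Cns,
        rieszD N α (fun x => |u x| ^ t) (fun x => |u x| ^ t) ≤
          Cgn * gnorm N s Cns u ^ (2 * t * (((N : ℝ) * t - (N : ℝ) - α) / (2 * t * s)))
            * (∫ x : RN N, (u x) ^ 2) ^ (t * (1 - ((N : ℝ) * t - (N : ℝ) - α) / (2 * t * s))))
    (Cp : ℝ) (hCp0 : 0 < Cp)
    (hCp : ∀ u ∈ HsSet N s Cns,
      rieszD N α (fun x => |u x| ^ p) (fun x => |u x| ^ p) ≤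
        Cp * gnorm N s Cns u ^ (2 * p * (((N : ℝ) * p - (N : ℝ) - α) / (2 * p * s)))
          * (∫ x : RN N, (u x) ^ 2) ^ (p * (1 - ((N : ℝ) * p - (N : ℝ) - α) / (2 * p * s))))
    (hCpopt : ∀ C' : ℝ, (∀ u ∈ HsSet N s Cns,
      rieszD N α (fun x => |u x| ^ p) (fun x => |u x| ^ p) ≤
        C' * gnorm N s Cns u ^ (2 * p * (((N : ℝ) * p - (N : ℝ) - α) / (2 * p * s)))
          * (∫ x : RN N, (u x) ^ 2) ^ (p * (1 - ((N : ℝ) * p - (N : ℝ) - α) / (2 * p * s)))) →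
      Cp ≤ C')
    (a : ℝ) (ha0 : 0 < a) (ha : a < (p / (Cp * gmax ^ 2)) ^ (1 / (p - 1))) :
    mval N s Cns α V f g q p a ≤ mvalInf N s Cns α Vinf finf ginf q p a := by
  classical
  rcases Set.eq_empty_or_nonempty (Sset N s Cns a) with hS | hS
  · rw [mval, mvalInf, hS, Set.image_empty, Set.image_empty]
  have hN0 : (0:ℝ) < N := by linarith
  have hq1 : (1:ℝ) < q := lt_trans (by rw [lt_div_iff₀ hN0]; linarith) hq
  have hq0 : (0:ℝ) < q := by linarith
  have hp1 : (1:ℝ) < p := by linarith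
  have hp0 : (0:ℝ) < p := by linarith
  have hfmax : (0:ℝ) < fmax := lt_of_lt_of_le hfinf ((hflb 0).trans (hfub 0))
  have hgmax : (0:ℝ) < gmax := lt_of_lt_of_le hginf ((hglb 0).trans (hgub 0))
  have hVinf0 : (0:ℝ) ≤ Vinf := (hV0 0).trans (hVub 0)
  -- the two Gagliardo–Nirenberg bounds
  have hNq : (N:ℝ) + α < (N:ℝ) * q := by
    have h := (div_lt_iff₀ hN0).1 hq
    have h2 : q * (N:ℝ) = (N:ℝ) * q := mul_comm _ _
    linarith
  have hNp : (N:ℝ) * p = (N:ℝ) + 2 * s + α := by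
    rw [hp]; field_simp
  have hqlt : q < ((N:ℝ) + α) / ((N:ℝ) - 2 * s) := by
    rw [lt_div_iff₀ (by linarith : (0:ℝ) < (N:ℝ) - 2 * s)]
    have hqN : (N:ℝ) * q < (N:ℝ) + 2 * s + α := by
      rw [← hNp]; exact (mul_lt_mul_iff_right₀ hN0).2 hqp
    nlinarith
  obtain ⟨Cq, hCq0, hCqle⟩ := hGN q hq.le hqlt
  -- p-exponent identities
  have hs0' : s ≠ 0 := ne_of_gt hs0
  have hexp2 : 2 * p * (((N : ℝ) * p - (N : ℝ) - α) / (2 * p * s)) = 2 := by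
    rw [hNp]; field_simp; ring
  have hexp1 : p * (1 - ((N : ℝ) * p - (N : ℝ) - α) / (2 * p * s)) = p - 1 := by
    rw [hNp]; field_simp; ring
  -- theta for q
  set θ : ℝ := 2 * q * (((N : ℝ) * q - (N : ℝ) - α) / (2 * q * s)) with hθdef
  have hθ : θ = ((N:ℝ) * q - (N:ℝ) - α) / s := by
    rw [hθdef]; field_simp
  have hθ0 : 0 < θ := by rw [hθ]; exact div_pos (by linarith) hs0
  have hθ2 : θ < 2 := by
    rw [hθ, div_lt_iff₀ hs0]
    have hqN : (N:ℝ) * q < (N:ℝ) + 2 * s + α := by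
      rw [← hNp]; exact (mul_lt_mul_iff_right₀ hN0).2 hqp
    linarith
  -- smallness of a
  have hap : a ^ (p - 1) < p / (Cp * gmax ^ 2) := by
    have hb : (0:ℝ) < p / (Cp * gmax ^ 2) := by positivity
    have := Real.rpow_lt_rpow ha0.le ha (by linarith : (0:ℝ) < p - 1)
    rwa [← Real.rpow_mul hb.le, one_div_mul_cancel (by linarith : p - (1:ℝ) ≠ 0),
      Real.rpow_one] at this
  have hεpos : 0 < 1 / 2 - gmax ^ 2 * Cp * a ^ (p - 1) / (2 * p) := by
    have h1 : gmax ^ 2 * Cp * a ^ (p - 1) < p := by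
      have := (mul_lt_mul_iff_right₀ (by positivity : (0:ℝ) < Cp * gmax ^ 2)).2 hap
      rw [mul_div_cancel₀ _ (by positivity : Cp * gmax ^ 2 ≠ 0)] at this
      nlinarith
    rw [sub_pos, div_lt_div_iff₀ (by linarith) (by norm_num)]
    linarith
  set ε : ℝ := 1 / 2 - gmax ^ 2 * Cp * a ^ (p - 1) / (2 * p) with hεdef
  set K : ℝ := fmax ^ 2 * Cq * a ^ (q * (1 - ((N : ℝ) * q - (N : ℝ) - α) / (2 * q * s))) / (2 * q)
    with hKdef
  have hKpos : 0 < K := by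
    rw [hKdef]
    have := Real.rpow_pos_of_pos ha0 (q * (1 - ((N : ℝ) * q - (N : ℝ) - α) / (2 * q * s)))
    positivity
  obtain ⟨B, hB⟩ := coercive_bound hεpos hKpos hθ0 hθ2
  -- the uniform lower bound for J on S(a)
  have hlow : ∀ u ∈ Sset N s Cns a, -B ≤ Jfun N s Cns α V f g q p u := by
    rintro u ⟨huHs, hua⟩
    set X : ℝ := gnorm N s Cns u with hXdef
    have hX0 : 0 ≤ X := Real.sqrt_nonneg _
    have hXsq : X ^ (2:ℝ) = gnormSq N s Cns u := by
      rw [hXdef, show ((2:ℝ)) = ((2:ℕ):ℝ) by norm_num, Real.rpow_natCast]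
      exact Real.sq_sqrt (show (0:ℝ) ≤ gnormSq N s Cns u from ENNReal.toReal_nonneg)
    have hGq : ∀ x : RN N, (0:ℝ) ≤ |u x| ^ q := fun x => Real.rpow_nonneg (abs_nonneg _) _
    have hGp : ∀ x : RN N, (0:ℝ) ≤ |u x| ^ p := fun x => Real.rpow_nonneg (abs_nonneg _) _
    -- bound the f-term
    have hQf : Qf N α f q u ≤ fmax ^ 2 * (Cq * X ^ θ
        * a ^ (q * (1 - ((N : ℝ) * q - (N : ℝ) - α) / (2 * q * s)))) := by
      have h1 := (rieszD_sandwich N α hα0 hαN f (fun x => |u x| ^ q) hGq finf fmax hfinf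
        hflb hfub).2
      have h2 := hCqle u huHs
      rw [hua] at h2
      calc Qf N α f q u ≤ fmax ^ 2 * rieszD N α (fun x => |u x| ^ q) (fun x => |u x| ^ q) := h1
        _ ≤ fmax ^ 2 * (Cq * X ^ θ
            * a ^ (q * (1 - ((N : ℝ) * q - (N : ℝ) - α) / (2 * q * s)))) := by
            refine mul_le_mul_of_nonneg_left ?_ (by positivity)
            rw [hθdef]; exact h2
    -- bound the g-term
    have hQg : Qf N α g p u ≤ gmax ^ 2 * (Cp * X ^ (2:ℝ) * a ^ (p - 1)) := by
      have h1 := (rieszD_sandwich N α hα0 hαN g (fun x => |u x| ^ p) hGp ginf gmax hginf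
        hglb hgub).2
      have h2 := hCp u huHs
      rw [hua, hexp2, hexp1] at h2
      calc Qf N α g p u ≤ gmax ^ 2 * rieszD N α (fun x => |u x| ^ p) (fun x => |u x| ^ p) := h1
        _ ≤ gmax ^ 2 * (Cp * X ^ (2:ℝ) * a ^ (p - 1)) :=
            mul_le_mul_of_nonneg_left h2 (by positivity)
    have hVnn : 0 ≤ ∫ x : RN N, V x * (u x) ^ 2 :=
      integral_nonneg fun x => mul_nonneg (hV0 x) (sq_nonneg _)
    have hcomb := hB X hX0
    have h2q : (0:ℝ) < 2 * q := by linarith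
    have h2p : (0:ℝ) < 2 * p := by linarith
    have hdivf : Qf N α f q u / (2 * q) ≤ K * X ^ θ := by
      rw [hKdef]
      rw [div_le_iff₀ h2q]
      calc Qf N α f q u ≤ fmax ^ 2 * (Cq * X ^ θ
          * a ^ (q * (1 - ((N : ℝ) * q - (N : ℝ) - α) / (2 * q * s)))) := hQf
        _ = fmax ^ 2 * Cq * a ^ (q * (1 - ((N : ℝ) * q - (N : ℝ) - α) / (2 * q * s))) / (2 * q)
            * X ^ θ * (2 * q) := by field_simp
    have hdivg : Qf N α g p u / (2 * p) ≤ gmax ^ 2 * Cp * a ^ (p - 1) / (2 * p) * X ^ (2:ℝ) := by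
      rw [div_le_iff₀ h2p]
      calc Qf N α g p u ≤ gmax ^ 2 * (Cp * X ^ (2:ℝ) * a ^ (p - 1)) := hQg
        _ = gmax ^ 2 * Cp * a ^ (p - 1) / (2 * p) * X ^ (2:ℝ) * (2 * p) := by field_simp
    rw [Jfun, ← hXsq]
    have hεX : ε * X ^ (2:ℝ) = (1/2) * X ^ (2:ℝ)
        - gmax ^ 2 * Cp * a ^ (p - 1) / (2 * p) * X ^ (2:ℝ) := by rw [hεdef]; ring
    clear_value θ ε K X
    linarith only [hcomb, hdivf, hdivg, hVnn, hεX]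
  have hBdd : BddBelow (Jfun N s Cns α V f g q p '' Sset N s Cns a) := by
    refine ⟨-B, ?_⟩
    rintro x ⟨u, hu, rfl⟩
    exact hlow u hu
  -- pointwise comparison J ≤ J∞ on S(a)
  have hpt : ∀ u ∈ Sset N s Cns a,
      Jfun N s Cns α V f g q p u ≤ Jinf N s Cns α Vinf finf ginf q p u := by
    rintro u ⟨huHs, hua⟩
    have hGq : ∀ x : RN N, (0:ℝ) ≤ |u x| ^ q := fun x => Real.rpow_nonneg (abs_nonneg _) _
    have hGp : ∀ x : RN N, (0:ℝ) ≤ |u x| ^ p := fun x => Real.rpow_nonneg (abs_nonneg _) _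
    have hQf := (rieszD_sandwich N α hα0 hαN f (fun x => |u x| ^ q) hGq finf fmax hfinf
      hflb hfub).1
    have hQg := (rieszD_sandwich N α hα0 hαN g (fun x => |u x| ^ p) hGp ginf gmax hginf
      hglb hgub).1
    have hu2 : Integrable (fun x : RN N => (u x) ^ 2) := huHs.1.integrable_sq
    have hVu2 : Integrable (fun x : RN N => V x * (u x) ^ 2) :=
      hu2.bdd_mul (c := Vinf) hVmeas.aestronglyMeasurable
        (ae_of_all _ fun x => by rw [Real.norm_eq_abs, abs_of_nonneg (hV0 x)]; exact hVub x)
    have hVint : (∫ x : RN N, V x * (u x) ^ 2) ≤ Vinf * ∫ x : RN N, (u x) ^ 2 := by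
      rw [← integral_const_mul]
      exact integral_mono hVu2 (hu2.const_mul Vinf)
        (fun x => mul_le_mul_of_nonneg_right (hVub x) (sq_nonneg _))
    have h2q : (0:ℝ) < 2 * q := by linarith
    have h2p : (0:ℝ) < 2 * p := by linarith
    have hf' : finf ^ 2 / (2 * q) * rieszD N α (fun x => |u x| ^ q) (fun x => |u x| ^ q)
        ≤ Qf N α f q u / (2 * q) := by
      rw [div_mul_eq_mul_div, div_le_div_iff₀ h2q h2q]
      exact mul_le_mul_of_nonneg_right hQf h2q.le
    have hg' : ginf ^ 2 / (2 * p) * rieszD N α (fun x => |u x| ^ p) (fun x => |u x| ^ p)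
        ≤ Qf N α g p u / (2 * p) := by
      rw [div_mul_eq_mul_div, div_le_div_iff₀ h2p h2p]
      exact mul_le_mul_of_nonneg_right hQg h2p.le
    rw [Jfun, Jinf]
    have : Vinf / 2 * (∫ x : RN N, (u x) ^ 2) = (1/2) * (Vinf * ∫ x : RN N, (u x) ^ 2) := by
      ring
    rw [this]
    linarith
  -- conclude
  rw [mval, mvalInf]
  refine le_csInf (hS.image _) ?_
  rintro y ⟨u, hu, rfl⟩
  exact (csInf_le hBdd ⟨u, hu, rfl⟩).trans (hpt u hu)
end
end

section
/- Suppose 1 < q < p and that V, f, g satisfy (V), (f), (g). Let a > 0, let u ∈ S(a) be not almost everywhere zero, and let λ ∈ ℝ be such that (u, λ) is a weak solution of (−Δ)^s u + V u = λ u + f (I_α * (f|u|^q)) |u|^{q−2} u + g (I_α * (g|u|^p)) |u|^{p−2} u. Then λ a < 2q J(u); in particular, if J(u) = m(a) then λ < 2q m(a) / a. -/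
open MeasureTheory Filter Topology
open scoped ENNReal

noncomputable section

namespace Stmt17Helpers

open MeasureTheory ENNReal Filter

variable {X Y : Type*} [MeasurableSpace X] [MeasurableSpace Y]
  {μ : Measure X} {ν : Measure Y} [SFinite μ] [SFinite ν]

lemma aux_sections (F : X → Y → ℝ)
    (hF : AEMeasurable (fun z : X × Y => F z.1 z.2) (μ.prod ν)) :
    ∃ G : X × Y → ℝ, Measurable G ∧
      ∀ᵐ x ∂μ, (fun y => F x y) =ᵐ[ν] fun y => G (x, y) :=
  ⟨hF.mk _, hF.measurable_mk, Measure.ae_ae_of_ae_prod hF.ae_eq_mk⟩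

lemma integral_eq_of_fin (F : X → Y → ℝ)
    (hF : AEMeasurable (fun z : X × Y => F z.1 z.2) (μ.prod ν))
    (hnn : ∀ x y, 0 ≤ F x y)
    (hfin : (∫⁻ x, ∫⁻ y, ENNReal.ofReal (F x y) ∂ν ∂μ) ≠ ⊤) :
    (∫ x, ∫ y, F x y ∂ν ∂μ) = (∫⁻ x, ∫⁻ y, ENNReal.ofReal (F x y) ∂ν ∂μ).toReal := by
  obtain ⟨G, hGm, hae⟩ := aux_sections F hF
  have hGlm : Measurable fun x => ∫⁻ y, ENNReal.ofReal (G (x, y)) ∂ν :=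
    Measurable.lintegral_prod_right (ENNReal.measurable_ofReal.comp hGm)
  have h2 : ∀ᵐ x ∂μ, (∫⁻ y, ENNReal.ofReal (F x y) ∂ν)
      = ∫⁻ y, ENNReal.ofReal (G (x, y)) ∂ν := by
    filter_upwards [hae] with x hx
    exact lintegral_congr_ae (hx.mono fun y hy => congrArg ENNReal.ofReal hy)
  have hLae : AEMeasurable (fun x => ∫⁻ y, ENNReal.ofReal (F x y) ∂ν) μ :=
    ⟨_, hGlm, h2⟩
  have h3 : (∫ x, ∫ y, F x y ∂ν ∂μ)
      = ∫ x, (∫⁻ y, ENNReal.ofReal (F x y) ∂ν).toReal ∂μ := by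
    refine integral_congr_ae ?_
    filter_upwards [hae] with x hx
    exact integral_eq_lintegral_of_nonneg_ae (Eventually.of_forall (hnn x))
      (AEMeasurable.aestronglyMeasurable
        ⟨fun y => G (x, y), hGm.comp measurable_prodMk_left, hx⟩)
  have h4 : ∫ x, (∫⁻ y, ENNReal.ofReal (F x y) ∂ν).toReal ∂μ
      = (∫⁻ x, ENNReal.ofReal ((∫⁻ y, ENNReal.ofReal (F x y) ∂ν).toReal) ∂μ).toReal :=
    integral_eq_lintegral_of_nonneg_ae
      (Eventually.of_forall fun x => ENNReal.toReal_nonneg)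
      (AEMeasurable.aestronglyMeasurable (ENNReal.measurable_toReal.comp_aemeasurable hLae))
  have h5 : ∀ᵐ x ∂μ, (∫⁻ y, ENNReal.ofReal (F x y) ∂ν) ≠ ⊤ :=
    (ae_lt_top' hLae hfin).mono fun x hx => hx.ne
  have h6 : (∫⁻ x, ENNReal.ofReal ((∫⁻ y, ENNReal.ofReal (F x y) ∂ν).toReal) ∂μ)
      = ∫⁻ x, ∫⁻ y, ENNReal.ofReal (F x y) ∂ν ∂μ := by
    refine lintegral_congr_ae ?_
    filter_upwards [h5] with x hx
    exact ENNReal.ofReal_toReal hx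
  rw [h3, h4, h6]

lemma toReal_le_integral (F : X → Y → ℝ)
    (hF : AEMeasurable (fun z : X × Y => F z.1 z.2) (μ.prod ν))
    (hnn : ∀ x y, 0 ≤ F x y) :
    (∫⁻ x, ∫⁻ y, ENNReal.ofReal (F x y) ∂ν ∂μ).toReal ≤ ∫ x, ∫ y, F x y ∂ν ∂μ := by
  by_cases hfin : (∫⁻ x, ∫⁻ y, ENNReal.ofReal (F x y) ∂ν ∂μ) = ⊤
  · rw [hfin]
    simp only [ENNReal.toReal_top]
    exact integral_nonneg fun x => integral_nonneg fun y => hnn x y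
  · exact (integral_eq_of_fin F hF hnn hfin).ge

lemma ae_nonpos_of_lintegral_zero (F : X → Y → ℝ)
    (hF : AEMeasurable (fun z : X × Y => F z.1 z.2) (μ.prod ν))
    (h0 : (∫⁻ x, ∫⁻ y, ENNReal.ofReal (F x y) ∂ν ∂μ) = 0) :
    ∀ᵐ x ∂μ, ∀ᵐ y ∂ν, F x y ≤ 0 := by
  obtain ⟨G, hGm, hae⟩ := aux_sections F hF
  have hGlm : Measurable fun x => ∫⁻ y, ENNReal.ofReal (G (x, y)) ∂ν :=
    Measurable.lintegral_prod_right (ENNReal.measurable_ofReal.comp hGm)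
  have h2 : ∀ᵐ x ∂μ, (∫⁻ y, ENNReal.ofReal (F x y) ∂ν)
      = ∫⁻ y, ENNReal.ofReal (G (x, y)) ∂ν := by
    filter_upwards [hae] with x hx
    exact lintegral_congr_ae (hx.mono fun y hy => congrArg ENNReal.ofReal hy)
  have hLae : AEMeasurable (fun x => ∫⁻ y, ENNReal.ofReal (F x y) ∂ν) μ :=
    ⟨_, hGlm, h2⟩
  have h5 : ∀ᵐ x ∂μ, (∫⁻ y, ENNReal.ofReal (F x y) ∂ν) = 0 := by
    have := (lintegral_eq_zero_iff' hLae).mp h0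
    filter_upwards [this] with x hx using hx
  filter_upwards [hae, h5] with x hx h5x
  have hsec : AEMeasurable (fun y => ENNReal.ofReal (F x y)) ν :=
    ENNReal.measurable_ofReal.comp_aemeasurable
      ⟨fun y => G (x, y), hGm.comp measurable_prodMk_left, hx⟩
  have := (lintegral_eq_zero_iff' hsec).mp h5x
  filter_upwards [this] with y hy
  exact ENNReal.ofReal_eq_zero.mp hy

lemma pow_helper (t r : ℝ) (hr : 1 < r) : |t| ^ (r - 2) * t * t = |t| ^ r := by
  rcases eq_or_ne t 0 with h | h
  · rw [h]
    rw [abs_zero, Real.zero_rpow (by linarith : r ≠ 0)]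
    ring
  · have ht : (0:ℝ) < |t| := abs_pos.mpr h
    have h2 : |t| ^ ((2:ℕ):ℝ) = t * t := by
      rw [Real.rpow_natCast, sq_abs]
      ring
    calc |t| ^ (r - 2) * t * t = |t| ^ (r - 2) * (|t| ^ ((2:ℕ):ℝ)) := by rw [h2]; ring
      _ = |t| ^ (r - 2 + 2) := (Real.rpow_add ht _ _).symm
      _ = |t| ^ r := by norm_num

end Stmt17Helpers

/-- Lagrange-multiplier bound from the proofs of Theorems 1.4 and 1.5.
If `1 < q < p` and `(u, λ)` is a weak solution with `u ∈ S(a)` not a.e. zero, then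
`λ a < 2q J(u)`; in particular if `J(u) = m(a)` then `λ < 2q m(a)/a`. -/
theorem statement17
    (N : ℕ) (s Cns α : ℝ)
    (hs0 : 0 < s) (hs1 : s < 1) (hN : 2 * s < (N : ℝ))
    (hα0 : 0 < α) (hαN : α < (N : ℝ)) (hCns : 0 < Cns)
    (q p : ℝ) (hq1 : 1 < q) (hqp : q < p)
    (V : RN N → ℝ) (Vinf : ℝ)
    (hVmeas : Measurable V)
    (hV0 : ∀ x, 0 ≤ V x) (hVub : ∀ x, V x ≤ Vinf)
    (hVtend : Tendsto V (cocompact (RN N)) (𝓝 Vinf))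
    (f g : RN N → ℝ) (finf fmax ginf gmax : ℝ)
    (hfmeas : Measurable f) (hgmeas : Measurable g)
    (hfinf : 0 < finf) (hginf : 0 < ginf)
    (hftend : Tendsto f (cocompact (RN N)) (𝓝 finf))
    (hgtend : Tendsto g (cocompact (RN N)) (𝓝 ginf))
    (hflb : ∀ x, finf ≤ f x) (hfub : ∀ x, f x ≤ fmax)
    (hglb : ∀ x, ginf ≤ g x) (hgub : ∀ x, g x ≤ gmax)
    (hfmax : fmax = ⨆ x, f x) (hgmax : gmax = ⨆ x, g x)
    (a : ℝ) (ha : 0 < a)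
    (u : RN N → ℝ) (hu : u ∈ Sset N s Cns a)
    (hune : ¬ (u =ᵐ[(volume : Measure (RN N))] (0 : RN N → ℝ)))
    (lam : ℝ)
    (hsol : isWeakSol N s Cns α V f g q p u lam) :
    lam * a < 2 * q * Jfun N s Cns α V f g q p u ∧
    (Jfun N s Cns α V f g q p u = mval N s Cns α V f g q p a →
      lam < 2 * q * mval N s Cns α V f g q p a / a) := by
  classical
  obtain ⟨⟨huL2, hufin⟩, hua⟩ := hu
  have hum : AEMeasurable u (volume : Measure (RN N)) :=
    huL2.aestronglyMeasurable.aemeasurable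
  have hp1 : (1:ℝ) < p := lt_trans hq1 hqp
  have hq0 : (0:ℝ) < q := by linarith
  have hp0 : (0:ℝ) < p := by linarith
  -- measurability on the product space
  have hu1 : AEMeasurable (fun z : RN N × RN N => u z.1)
      ((volume : Measure (RN N)).prod volume) := hum.comp_fst
  have hu2 : AEMeasurable (fun z : RN N × RN N => u z.2)
      ((volume : Measure (RN N)).prod volume) := hum.comp_snd
  have hF1m : AEMeasurable
      (fun z : RN N × RN N => |u z.1 - u z.2| ^ 2 / ‖z.1 - z.2‖ ^ ((N : ℝ) + 2 * s))
      ((volume : Measure (RN N)).prod volume) := by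
    have hnum : AEMeasurable (fun z : RN N × RN N => |u z.1 - u z.2| ^ 2)
        ((volume : Measure (RN N)).prod volume) :=
      ((continuous_abs.measurable.comp_aemeasurable (hu1.sub hu2)).pow aemeasurable_const)
    have hden : Measurable (fun z : RN N × RN N => ‖z.1 - z.2‖ ^ ((N : ℝ) + 2 * s)) :=
      ((measurable_fst.sub measurable_snd).norm).pow measurable_const
    exact hnum.div hden.aemeasurable
  have habsq : ∀ r : ℝ, AEMeasurable (fun z : RN N × RN N => |u z.1| ^ r)
      ((volume : Measure (RN N)).prod volume) := fun r =>
    (continuous_abs.measurable.comp_aemeasurable hu1).pow aemeasurable_const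
  have habsq2 : ∀ r : ℝ, AEMeasurable (fun z : RN N × RN N => |u z.2| ^ r)
      ((volume : Measure (RN N)).prod volume) := fun r =>
    (continuous_abs.measurable.comp_aemeasurable hu2).pow aemeasurable_const
  have hdenα : Measurable (fun z : RN N × RN N => ‖z.1 - z.2‖ ^ (α - (N : ℝ))) :=
    ((measurable_fst.sub measurable_snd).norm).pow measurable_const
  have hF2m : AEMeasurable
      (fun z : RN N × RN N => (f z.1 * |u z.1| ^ q) * (f z.2 * |u z.2| ^ q)
        * ‖z.1 - z.2‖ ^ (α - (N : ℝ)))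
      ((volume : Measure (RN N)).prod volume) :=
    ((((hfmeas.comp measurable_fst).aemeasurable.mul (habsq q)).mul
      ((hfmeas.comp measurable_snd).aemeasurable.mul (habsq2 q)))).mul hdenα.aemeasurable
  have hF3m : AEMeasurable
      (fun z : RN N × RN N => (g z.1 * |u z.1| ^ p) * (g z.2 * |u z.2| ^ p)
        * ‖z.1 - z.2‖ ^ (α - (N : ℝ)))
      ((volume : Measure (RN N)).prod volume) :=
    ((((hgmeas.comp measurable_fst).aemeasurable.mul (habsq p)).mul
      ((hgmeas.comp measurable_snd).aemeasurable.mul (habsq2 p)))).mul hdenα.aemeasurable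
  -- nonnegativity
  have hfpos : ∀ x, 0 < f x := fun x => lt_of_lt_of_le hfinf (hflb x)
  have hgpos : ∀ x, 0 < g x := fun x => lt_of_lt_of_le hginf (hglb x)
  have hF1nn : ∀ x y : RN N, 0 ≤ |u x - u y| ^ 2 / ‖x - y‖ ^ ((N : ℝ) + 2 * s) :=
    fun x y => div_nonneg (pow_nonneg (abs_nonneg _) 2) (Real.rpow_nonneg (norm_nonneg _) _)
  have hF2nn : ∀ x y : RN N, 0 ≤ (f x * |u x| ^ q) * (f y * |u y| ^ q)
      * ‖x - y‖ ^ (α - (N : ℝ)) := fun x y =>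
    mul_nonneg (mul_nonneg (mul_nonneg (hfpos x).le (Real.rpow_nonneg (abs_nonneg _) _))
      (mul_nonneg (hfpos y).le (Real.rpow_nonneg (abs_nonneg _) _)))
      (Real.rpow_nonneg (norm_nonneg _) _)
  have hF3nn : ∀ x y : RN N, 0 ≤ (g x * |u x| ^ p) * (g y * |u y| ^ p)
      * ‖x - y‖ ^ (α - (N : ℝ)) := fun x y =>
    mul_nonneg (mul_nonneg (mul_nonneg (hgpos x).le (Real.rpow_nonneg (abs_nonneg _) _))
      (mul_nonneg (hgpos y).le (Real.rpow_nonneg (abs_nonneg _) _)))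
      (Real.rpow_nonneg (norm_nonneg _) _)
  -- identify the Gagliardo term
  have hgag : gagSq N s Cns u = ENNReal.ofReal (Cns / 2) *
      ∫⁻ x : RN N, ∫⁻ y : RN N,
        ENNReal.ofReal (|u x - u y| ^ 2 / ‖x - y‖ ^ ((N : ℝ) + 2 * s)) := rfl
  have hL1fin : (∫⁻ x : RN N, ∫⁻ y : RN N,
      ENNReal.ofReal (|u x - u y| ^ 2 / ‖x - y‖ ^ ((N : ℝ) + 2 * s))) ≠ ⊤ := by
    intro h
    rw [hgag, h, ENNReal.mul_top (by simp [ENNReal.ofReal_eq_zero]; positivity)] at hufin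
    exact lt_irrefl _ hufin
  have hK1 : (∫ x : RN N, ∫ y : RN N, |u x - u y| ^ 2 / ‖x - y‖ ^ ((N : ℝ) + 2 * s))
      = (∫⁻ x : RN N, ∫⁻ y : RN N,
        ENNReal.ofReal (|u x - u y| ^ 2 / ‖x - y‖ ^ ((N : ℝ) + 2 * s))).toReal :=
    Stmt17Helpers.integral_eq_of_fin _ hF1m hF1nn hL1fin
  have hgnorm : gnormSq N s Cns u = (Cns / 2) *
      (∫⁻ x : RN N, ∫⁻ y : RN N,
        ENNReal.ofReal (|u x - u y| ^ 2 / ‖x - y‖ ^ ((N : ℝ) + 2 * s))).toReal := by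
    rw [gnormSq, hgag, ENNReal.toReal_mul, ENNReal.toReal_ofReal (by positivity)]
  -- positivity of rieszA
  have hApos : 0 < rieszA N α := by
    have h1 : 0 < Real.Gamma (((N : ℝ) - α) / 2) := Real.Gamma_pos_of_pos (by linarith)
    have h2 : 0 < Real.Gamma (α / 2) := Real.Gamma_pos_of_pos (by linarith)
    have h3 : 0 < Real.pi ^ ((N : ℝ) / 2) := Real.rpow_pos_of_pos Real.pi_pos _
    have h4 : 0 < (2:ℝ) ^ α := Real.rpow_pos_of_pos two_pos _
    exact div_pos h1 (by positivity)
  -- the Q-terms: lintegral-based values are below the iterated Bochner integrals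
  have hQdef : Qf N α f q u = rieszA N α *
      (∫⁻ x : RN N, ∫⁻ y : RN N, ENNReal.ofReal ((f x * |u x| ^ q) * (f y * |u y| ^ q)
        * ‖x - y‖ ^ (α - (N : ℝ)))).toReal := rfl
  have hPdef : Qf N α g p u = rieszA N α *
      (∫⁻ x : RN N, ∫⁻ y : RN N, ENNReal.ofReal ((g x * |u x| ^ p) * (g y * |u y| ^ p)
        * ‖x - y‖ ^ (α - (N : ℝ)))).toReal := rfl
  have hQle : Qf N α f q u ≤ rieszA N α *
      ∫ x : RN N, ∫ y : RN N, (f x * |u x| ^ q) * (f y * |u y| ^ q)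
        * ‖x - y‖ ^ (α - (N : ℝ)) := by
    rw [hQdef]
    exact mul_le_mul_of_nonneg_left (Stmt17Helpers.toReal_le_integral _ hF2m hF2nn) hApos.le
  have hPle : Qf N α g p u ≤ rieszA N α *
      ∫ x : RN N, ∫ y : RN N, (g x * |u x| ^ p) * (g y * |u y| ^ p)
        * ‖x - y‖ ^ (α - (N : ℝ)) := by
    rw [hPdef]
    exact mul_le_mul_of_nonneg_left (Stmt17Helpers.toReal_le_integral _ hF3m hF3nn) hApos.le
  have hQ0 : 0 ≤ Qf N α f q u := by
    rw [hQdef]; exact mul_nonneg hApos.le ENNReal.toReal_nonneg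
  have hP0 : 0 ≤ Qf N α g p u := by
    rw [hPdef]; exact mul_nonneg hApos.le ENNReal.toReal_nonneg
  -- rewrite the weak-solution identity with test function u
  have E := hsol u ⟨huL2, hufin⟩
  have hInt1 : (∫ x : RN N, ∫ y : RN N,
      (u x - u y) * (u x - u y) / ‖x - y‖ ^ ((N : ℝ) + 2 * s))
      = ∫ x : RN N, ∫ y : RN N, |u x - u y| ^ 2 / ‖x - y‖ ^ ((N : ℝ) + 2 * s) := by
    congr 1; funext x; congr 1; funext y
    rw [sq_abs, pow_two]
  have hInt2 : (∫ x : RN N, ∫ y : RN N,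
      f x * f y * |u y| ^ q * |u x| ^ (q - 2) * u x * u x * ‖x - y‖ ^ (α - (N : ℝ)))
      = ∫ x : RN N, ∫ y : RN N, (f x * |u x| ^ q) * (f y * |u y| ^ q)
          * ‖x - y‖ ^ (α - (N : ℝ)) := by
    congr 1; funext x; congr 1; funext y
    linear_combination (f x * f y * |u y| ^ q * ‖x - y‖ ^ (α - (N : ℝ))) *
      Stmt17Helpers.pow_helper (u x) q hq1
  have hInt3 : (∫ x : RN N, ∫ y : RN N,
      g x * g y * |u y| ^ p * |u x| ^ (p - 2) * u x * u x * ‖x - y‖ ^ (α - (N : ℝ)))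
      = ∫ x : RN N, ∫ y : RN N, (g x * |u x| ^ p) * (g y * |u y| ^ p)
          * ‖x - y‖ ^ (α - (N : ℝ)) := by
    congr 1; funext x; congr 1; funext y
    linear_combination (g x * g y * |u y| ^ p * ‖x - y‖ ^ (α - (N : ℝ))) *
      Stmt17Helpers.pow_helper (u x) p hp1
  have hIntV : (∫ x : RN N, V x * u x * u x) = ∫ x : RN N, V x * (u x) ^ 2 := by
    congr 1; funext x; ring
  have hIntU : (∫ x : RN N, u x * u x) = a := by
    rw [show (∫ x : RN N, u x * u x) = ∫ x : RN N, (u x) ^ 2 from by congr 1; funext x; ring]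
    exact hua
  rw [hInt1, hInt2, hInt3, hIntV, hIntU, hK1] at E
  -- E : Cns / 2 * toReal L1 + ∫ V u² = lam * a + rieszA * I2 + rieszA * I3
  have hVt0 : 0 ≤ ∫ x : RN N, V x * (u x) ^ 2 :=
    integral_nonneg fun x => mul_nonneg (hV0 x) (sq_nonneg _)
  -- positivity of the Gagliardo energy
  have hN0 : 0 < N := by
    by_contra h
    push_neg at h
    interval_cases N
    · norm_num at hN; linarith
  haveI : Nonempty (Fin N) := Fin.pos_iff_nonempty.mp hN0
  haveI : Nontrivial (RN N) := by
    refine ⟨0, EuclideanSpace.single ⟨0, hN0⟩ 1, ?_⟩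
    intro h
    have := congrArg (fun v : RN N => v ⟨0, hN0⟩) h.symm
    simp [EuclideanSpace.single_apply] at this
  have huniv : (volume : Measure (RN N)) Set.univ = ⊤ :=
    measure_univ_of_isAddLeftInvariant _
  haveI : (ae (volume : Measure (RN N))).NeBot := by
    refine ae_neBot.mpr ?_
    intro h
    rw [h] at huniv
    simp at huniv
  haveI : NullSingletonClass (volume : Measure (RN N)) := by infer_instance
  have hKpos : 0 < gnormSq N s Cns u := by
    rw [gnormSq]
    refine ENNReal.toReal_pos ?_ hufin.ne
    intro hzero
    rw [hgag] at hzero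
    have hL10 : (∫⁻ x : RN N, ∫⁻ y : RN N,
        ENNReal.ofReal (|u x - u y| ^ 2 / ‖x - y‖ ^ ((N : ℝ) + 2 * s))) = 0 := by
      rcases mul_eq_zero.mp hzero with h | h
      · exact absurd h (by simp [ENNReal.ofReal_eq_zero]; positivity)
      · exact h
    have hae2 := Stmt17Helpers.ae_nonpos_of_lintegral_zero _ hF1m hL10
    have haeconst : ∀ᵐ x ∂(volume : Measure (RN N)),
        u =ᵐ[(volume : Measure (RN N))] (fun _ => u x) := by
      filter_upwards [hae2] with x hx
      have hxne : ∀ᵐ y ∂(volume : Measure (RN N)), y ≠ x := by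
        rw [ae_iff]
        have hset : {y : RN N | ¬ y ≠ x} = {x} := by ext y; simp
        rw [hset]
        exact measure_singleton x
      filter_upwards [hx, hxne] with y h1 h2
      have hxy : x ≠ y := fun h => h2 h.symm
      have hd : (0:ℝ) < ‖x - y‖ ^ ((N : ℝ) + 2 * s) :=
        Real.rpow_pos_of_pos (norm_pos_iff.mpr (sub_ne_zero.mpr hxy)) _
      have hnum : |u x - u y| ^ 2 ≤ 0 := by
        by_contra hcon
        push_neg at hcon
        exact absurd h1 (not_le.mpr (div_pos hcon hd))
      have h0' : |u x - u y| ^ 2 = 0 := le_antisymm hnum (pow_nonneg (abs_nonneg _) 2)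
      have h1' : u x - u y = 0 :=
        abs_eq_zero.mp ((pow_eq_zero_iff (by norm_num : (2:ℕ) ≠ 0)).mp h0')
      show u y = u x
      linarith [h1']
    obtain ⟨x₀, hx₀⟩ := haeconst.exists
    rcases eq_or_ne (u x₀) 0 with hc | hc
    · refine hune (hx₀.mono fun y hy => ?_)
      have hyy : u y = u x₀ := hy
      show u y = (0 : RN N → ℝ) y
      simp [hyy, hc]
    · have h2 : (∫ x : RN N, (u x) ^ 2) = ∫ _x : RN N, (u x₀) ^ 2 := by
        refine integral_congr_ae (hx₀.mono fun y hy => ?_)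
        have hyy : u y = u x₀ := hy
        show (u y) ^ 2 = (u x₀) ^ 2
        rw [hyy]
      have h3 : ¬ Integrable (fun _ : RN N => (u x₀) ^ 2) volume := by
        rw [integrable_const_iff]
        push_neg
        refine ⟨pow_ne_zero _ hc, ?_⟩
        exact fun h => h.measure_univ_lt_top.ne huniv
      have h4 : (∫ _x : RN N, (u x₀) ^ 2) = 0 := integral_undef h3
      rw [hua, h4] at h2
      linarith
  -- conclusion
  rw [← hgnorm] at E
  have hqne : q ≠ 0 := hq0.ne'
  have hpne : p ≠ 0 := hp0.ne'
  have h2qJ : 2 * q * Jfun N s Cns α V f g q p u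
      = q * gnormSq N s Cns u + q * (∫ x : RN N, V x * (u x) ^ 2)
        - Qf N α f q u - q / p * Qf N α g p u := by
    rw [Jfun]
    field_simp
  have hgoal1 : lam * a < 2 * q * Jfun N s Cns α V f g q p u := by
    rw [h2qJ]
    linarith [E, hQle, hPle, mul_pos (sub_pos.mpr hq1) hKpos,
      mul_nonneg (sub_nonneg.mpr hq1.le) hVt0,
      mul_le_mul_of_nonneg_right ((div_le_one hp0).mpr hqp.le) hP0]
  refine ⟨hgoal1, fun hJm => ?_⟩
  rw [lt_div_iff₀ ha, ← hJm]
  exact hgoal1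
end
end
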